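/- arXiv:2503.15480 — 2 statements merged into one kernel-verified Lean document; each statement's English description precedes it below -/
import Mathlib

section
/- Define Ω_b(ξ₁,ξ₂) = 1/(ξ₁+ξ₂) - 1/ξ₁ - 1/ξ₂ for nonzero real ξ₁, ξ₂ with ξ₁+ξ₂ ≠ 0. If min{|ξ₁|,|ξ₂|} ≥ 1, then |Ω_b(ξ₁,ξ₂)| ≤ C·|ξ|_max·|ξ|_min⁻², where |ξ|_max = max{|ξ₁|,|ξ₂|,|ξ₁+ξ₂|}, |ξ|_min = min{|ξ₁|,|ξ₂|,|ξ₁+ξ₂|}, and C is an absolute constant. -/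
noncomputable section

/-- The "bad" (singular) part of the resonance function. -/
def OmegaB (ξ₁ ξ₂ : ℝ) : ℝ := 1 / (ξ₁ + ξ₂) - 1 / ξ₁ - 1 / ξ₂

theorem omegaB_bound :
    ∃ C : ℝ, 0 < C ∧ ∀ ξ₁ ξ₂ : ℝ, ξ₁ ≠ 0 → ξ₂ ≠ 0 → ξ₁ + ξ₂ ≠ 0 →
      1 ≤ min |ξ₁| |ξ₂| →
      |OmegaB ξ₁ ξ₂| ≤
        C * (max (max |ξ₁| |ξ₂|) |ξ₁ + ξ₂|) * (min (min |ξ₁| |ξ₂|) |ξ₁ + ξ₂|) ^ (-2 : ℤ) := by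
  refine ⟨3, by norm_num, fun ξ₁ ξ₂ h₁ h₂ h₃ hmin => ?_⟩
  set m := min (min |ξ₁| |ξ₂|) |ξ₁ + ξ₂| with hm
  set M := max (max |ξ₁| |ξ₂|) |ξ₁ + ξ₂| with hM
  have hm0 : 0 < m := lt_min (lt_min (abs_pos.2 h₁) (abs_pos.2 h₂)) (abs_pos.2 h₃)
  have hmM : m ≤ M := le_trans (min_le_right _ _) (le_max_right _ _)
  have hb : ∀ x : ℝ, m ≤ |x| → |1 / x| ≤ 1 / m := by
    intro x hx
    rw [abs_div, abs_one]
    exact one_div_le_one_div_of_le hm0 hx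
  have e1 : |1 / (ξ₁ + ξ₂)| ≤ 1 / m := hb _ (min_le_right _ _)
  have e2 : |1 / ξ₁| ≤ 1 / m := hb _ (le_trans (min_le_left _ _) (min_le_left _ _))
  have e3 : |1 / ξ₂| ≤ 1 / m := hb _ (le_trans (min_le_left _ _) (min_le_right _ _))
  have tri : |OmegaB ξ₁ ξ₂| ≤ |1 / (ξ₁ + ξ₂)| + |1 / ξ₁| + |1 / ξ₂| := by
    unfold OmegaB
    calc |1 / (ξ₁ + ξ₂) - 1 / ξ₁ - 1 / ξ₂| ≤ |1 / (ξ₁ + ξ₂) - 1 / ξ₁| + |1 / ξ₂| :=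
          abs_sub _ _
      _ ≤ |1 / (ξ₁ + ξ₂)| + |1 / ξ₁| + |1 / ξ₂| := by
          gcongr; exact abs_sub _ _
  have hz : m ^ (-2 : ℤ) = (m ^ 2)⁻¹ := by
    rw [zpow_neg, zpow_two, sq]
  rw [hz]
  have h3 : (3:ℝ) / m = 1 / m + 1 / m + 1 / m := by ring
  have hΩ : |OmegaB ξ₁ ξ₂| ≤ 3 / m := by rw [h3]; linarith
  refine hΩ.trans ?_
  have h2 : (0:ℝ) < m ^ 2 := by positivity
  have : 3 * M * (m ^ 2)⁻¹ = 3 * M / m ^ 2 := by ring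
  rw [this, div_le_div_iff₀ hm0 h2]
  nlinarith
end
end

section
/- Let φ(ξ) = ξ|ξ| - γ/ξ with γ > 0 and define the resonance function Ω(ξ₁,ξ₂) = φ(ξ₁+ξ₂) - φ(ξ₁) - φ(ξ₂). If min{|ξ₁|,|ξ₂|} ≥ M for a sufficiently large absolute constant M, then |Ω(ξ₁,ξ₂)| ≤ C(γ)·(|ξ|_max²|ξ|_min + |ξ|_max|ξ|_min⁻²), where |ξ|_max and |ξ|_min are the max and min of |ξ₁|, |ξ₂|, |ξ₁+ξ₂|. -/
private lemma aux_rmbo (x y : ℝ) (hs : 0 < x + y) (hxy : |x| ≤ |y|) :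
    abs ((x+y)*|x+y| - x*|x| - y*|y|) ≤
      2 * (min (min |x| |y|) |x+y|) * (max (max |x| |y|) |x+y|) := by
  have hy : 0 < y := by
    by_contra h
    push_neg at h
    have : x ≤ |x| := le_abs_self x
    have : |y| = -y := abs_of_nonpos h
    linarith [le_abs_self x, hxy, this]
  rw [abs_of_pos hs, abs_of_pos hy] at *
  rcases le_or_gt 0 x with hx | hx
  · rw [abs_of_nonneg hx] at *
    have h1 : min (min x y) (x+y) = x := by
      rw [min_eq_left hxy]; exact min_eq_left (by linarith)
    have h2 : max (max x y) (x+y) = x + y := by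
      rw [max_eq_right hxy]; exact max_eq_right (by linarith)
    rw [h1, h2, abs_le]
    constructor <;> nlinarith
  · rw [abs_of_neg hx] at *
    have hax : -x ≤ y := hxy
    have hMx : max (max (-x) y) (x+y) = max y (x+y) := by rw [max_eq_right hax]
    rcases le_total (-x) (x+y) with h | h
    · have h1 : min (min (-x) y) (x+y) = -x := by
        rw [min_eq_left hax]; exact min_eq_left h
      rw [h1, hMx, abs_le]
      constructor <;> nlinarith [le_max_left y (x+y), le_max_right y (x+y)]
    · have h1 : min (min (-x) y) (x+y) = x + y := by
        rw [min_eq_left hax]; exact min_eq_right h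
      have h2 : max y (x+y) = y := max_eq_left (by linarith)
      rw [h1, hMx, h2, abs_le]
      constructor <;> nlinarith

private lemma key_pos_rmbo (x y : ℝ) (hs : 0 < x + y) :
    abs ((x+y)*|x+y| - x*|x| - y*|y|) ≤
      2 * (min (min |x| |y|) |x+y|) * (max (max |x| |y|) |x+y|) := by
  rcases le_total |x| |y| with h | h
  · exact aux_rmbo x y hs h
  · have h' := aux_rmbo y x (by linarith) h
    rw [add_comm y x, min_comm |y| |x|, max_comm |y| |x|] at h'
    have e : (x+y)*|x+y| - x*|x| - y*|y| = (x+y)*|x+y| - y*|y| - x*|x| := by ring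
    rw [e]; exact h'

private lemma key_rmbo (x y : ℝ) :
    abs ((x+y)*|x+y| - x*|x| - y*|y|) ≤
      2 * (min (min |x| |y|) |x+y|) * (max (max |x| |y|) |x+y|) := by
  rcases lt_trichotomy 0 (x+y) with hs | hs | hs
  · exact key_pos_rmbo x y hs
  · have hy : y = -x := by linarith
    subst hy
    have : x + -x = 0 := by ring
    rw [this]
    simp [abs_neg]
  · have h := key_pos_rmbo (-x) (-y) (by linarith)
    have e1 : -x + -y = -(x+y) := by ring
    rw [e1, abs_neg (x+y), abs_neg x, abs_neg y] at h
    have e2 : -(x+y) * |x+y| - (-x)*|x| - (-y)*|y|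
        = -((x+y)*|x+y| - x*|x| - y*|y|) := by ring
    rw [e2, abs_neg] at h
    exact h

noncomputable section

/-- The symbol of the rotation-modified Benjamin–Ono equation. -/
def phiRMBO (γ ξ : ℝ) : ℝ := ξ * |ξ| - γ / ξ

/-- The resonance function associated with `phiRMBO`. -/
def OmegaRMBO (γ ξ₁ ξ₂ : ℝ) : ℝ :=
  phiRMBO γ (ξ₁ + ξ₂) - phiRMBO γ ξ₁ - phiRMBO γ ξ₂

theorem resonance_bound_RMBO :
    ∃ M : ℝ, 0 < M ∧ ∀ γ : ℝ, 0 < γ → ∃ C : ℝ, 0 < C ∧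
      ∀ ξ₁ ξ₂ : ℝ, ξ₁ ≠ 0 → ξ₂ ≠ 0 → ξ₁ + ξ₂ ≠ 0 → M ≤ min |ξ₁| |ξ₂| →
        |OmegaRMBO γ ξ₁ ξ₂| ≤
          C * ((max (max |ξ₁| |ξ₂|) |ξ₁ + ξ₂|) ^ 2 * (min (min |ξ₁| |ξ₂|) |ξ₁ + ξ₂|)
            + (max (max |ξ₁| |ξ₂|) |ξ₁ + ξ₂|) * (min (min |ξ₁| |ξ₂|) |ξ₁ + ξ₂|) ^ (-2 : ℤ)) := by
  refine ⟨1, one_pos, fun γ hγ => ⟨3 + 3 * γ, by linarith, fun ξ₁ ξ₂ h1 h2 hs hM => ?_⟩⟩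
  set mn := min (min |ξ₁| |ξ₂|) |ξ₁ + ξ₂| with hmn
  set Mx := max (max |ξ₁| |ξ₂|) |ξ₁ + ξ₂| with hMx
  have ha1 : (0:ℝ) < |ξ₁| := abs_pos.mpr h1
  have ha2 : (0:ℝ) < |ξ₂| := abs_pos.mpr h2
  have has : (0:ℝ) < |ξ₁ + ξ₂| := abs_pos.mpr hs
  have hmn0 : 0 < mn := lt_min (lt_min ha1 ha2) has
  have hmn1 : mn ≤ |ξ₁| := le_trans (min_le_left _ _) (min_le_left _ _)
  have hmn2 : mn ≤ |ξ₂| := le_trans (min_le_left _ _) (min_le_right _ _)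
  have hmns : mn ≤ |ξ₁ + ξ₂| := min_le_right _ _
  have hMx1 : |ξ₁| ≤ Mx := le_trans (le_max_left _ _) (le_max_left _ _)
  have hMxs : |ξ₁ + ξ₂| ≤ Mx := le_max_right _ _
  have hM1 : (1:ℝ) ≤ |ξ₁| := le_trans hM (min_le_left _ _)
  have hMxge1 : (1:ℝ) ≤ Mx := le_trans hM1 hMx1
  have hmnMx : mn ≤ Mx := le_trans hmns hMxs
  -- decompose Omega
  have hΩ : OmegaRMBO γ ξ₁ ξ₂ =
      ((ξ₁+ξ₂)*|ξ₁+ξ₂| - ξ₁*|ξ₁| - ξ₂*|ξ₂|) + (- (γ/(ξ₁+ξ₂)) + γ/ξ₁ + γ/ξ₂) := by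
    simp only [OmegaRMBO, phiRMBO]; ring
  have hA := key_rmbo ξ₁ ξ₂
  have hB : |(- (γ/(ξ₁+ξ₂)) + γ/ξ₁ + γ/ξ₂)| ≤ γ/|ξ₁+ξ₂| + γ/|ξ₁| + γ/|ξ₂| := by
    calc |(- (γ/(ξ₁+ξ₂)) + γ/ξ₁ + γ/ξ₂)|
        ≤ |(- (γ/(ξ₁+ξ₂)) + γ/ξ₁)| + |γ/ξ₂| := abs_add_le _ _
      _ ≤ |(- (γ/(ξ₁+ξ₂)))| + |γ/ξ₁| + |γ/ξ₂| := by
          gcongr; exact abs_add_le _ _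
      _ = γ/|ξ₁+ξ₂| + γ/|ξ₁| + γ/|ξ₂| := by
          rw [abs_neg, abs_div, abs_div, abs_div, abs_of_pos hγ]
  have hrec : γ/|ξ₁+ξ₂| + γ/|ξ₁| + γ/|ξ₂| ≤ 3 * (γ / mn) := by
    have e1 : γ/|ξ₁+ξ₂| ≤ γ/mn := by gcongr
    have e2 : γ/|ξ₁| ≤ γ/mn := by gcongr
    have e3 : γ/|ξ₂| ≤ γ/mn := by gcongr
    linarith
  have hzpow : mn ^ (-2 : ℤ) = 1 / mn ^ 2 := by
    rw [zpow_neg, one_div]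
    norm_cast
  have hrec2 : 3 * (γ / mn) ≤ 3 * γ * (Mx * mn ^ (-2 : ℤ)) := by
    rw [hzpow]
    have e0 : 3 * (γ / mn) = 3 * γ * mn / mn ^ 2 := by
      field_simp
    rw [e0]
    have e1 : 3 * γ * mn / mn ^ 2 ≤ 3 * γ * Mx / mn ^ 2 := by gcongr
    calc 3 * γ * mn / mn ^ 2 ≤ 3 * γ * Mx / mn ^ 2 := e1
      _ = 3 * γ * (Mx * (1 / mn ^ 2)) := by ring
  have hquad : 2 * mn * Mx ≤ 3 * (Mx ^ 2 * mn) := by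
    nlinarith [mul_nonneg (mul_nonneg hmn0.le (by linarith : (0:ℝ) ≤ Mx))
      (by linarith : (0:ℝ) ≤ 3 * Mx - 2)]
  calc |OmegaRMBO γ ξ₁ ξ₂|
      ≤ 2 * mn * Mx + 3 * (γ / mn) := by
        rw [hΩ]
        exact le_trans (abs_add_le _ _) (add_le_add hA (le_trans hB hrec))
    _ ≤ 3 * (Mx ^ 2 * mn) + 3 * γ * (Mx * mn ^ (-2 : ℤ)) := add_le_add hquad hrec2
    _ ≤ (3 + 3 * γ) * (Mx ^ 2 * mn + Mx * mn ^ (-2 : ℤ)) := by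
        have t1 : 0 ≤ Mx ^ 2 * mn := by positivity
        have t2 : 0 ≤ Mx * mn ^ (-2 : ℤ) := by positivity
        nlinarith
end
end
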